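/- Under the assumptions of the equivalence setup, every minimizer of J₁ over U is also a minimizer of J₀ over U; in particular, if U₁* is nonempty then U₀* is nonempty. -/

import Mathlib

open MeasureTheory Set

noncomputable def J0 (T : ℝ) (u : ℝ → ℝ) : ℝ :=
  (volume {t ∈ Icc (0:ℝ) T | u t ≠ 0}).toReal

noncomputable def J1 (T : ℝ) (u : ℝ → ℝ) : ℝ :=
  ∫ t in Icc (0:ℝ) T, |u t|

lemma J0_eq (T : ℝ) (v : ℝ → ℝ) (hv : Measurable v) :
    J0 T v = ((volume.restrict (Icc (0:ℝ) T)) {t | v t ≠ 0}).toReal := by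
  have hs : MeasurableSet {t | v t ≠ 0} := hv (measurableSet_singleton 0).compl
  have he : {t | t ∈ Icc (0:ℝ) T ∧ v t ≠ 0} = {t | v t ≠ 0} ∩ Icc (0:ℝ) T := by
    ext t; simp [and_comm]
  rw [J0, Measure.restrict_apply hs, he]

lemma indicator_integrable (T : ℝ) (v : ℝ → ℝ) (hv : Measurable v) :
    Integrable (({t | v t ≠ 0}).indicator (fun _ => (1:ℝ)))
      (volume.restrict (Icc (0:ℝ) T)) :=
  (integrable_const (1:ℝ)).indicator (hv (measurableSet_singleton 0).compl)

lemma indicator_int (T : ℝ) (v : ℝ → ℝ) (hv : Measurable v) :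
    ∫ t in Icc (0:ℝ) T, ({t | v t ≠ 0}).indicator (fun _ => (1:ℝ)) t = J0 T v := by
  have hs : MeasurableSet {t | v t ≠ 0} := hv (measurableSet_singleton 0).compl
  rw [integral_indicator_const _ hs, J0_eq T v hv]
  simp
  rfl

lemma J1_le_J0 (T : ℝ) (v : ℝ → ℝ) (hv : Measurable v)
    (hb : ∀ᵐ t ∂(volume.restrict (Icc (0:ℝ) T)), |v t| ≤ 1) :
    J1 T v ≤ J0 T v := by
  rw [J1, ← indicator_int T v hv]
  apply integral_mono_ae
  · exact (integrable_const (1:ℝ)).mono' (hv.abs.aestronglyMeasurable) (by filter_upwards [hb] with t h using by simpa using h)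
  · exact indicator_integrable T v hv
  · filter_upwards [hb] with t h
    by_cases h0 : v t = 0
    · simp [h0, Set.indicator]
    · simp [Set.indicator, h0, h]

lemma J1_eq_J0 (T : ℝ) (u : ℝ → ℝ) (hu : Measurable u)
    (hv : ∀ᵐ t ∂(volume.restrict (Icc (0:ℝ) T)), u t ∈ ({-1, 0, 1} : Set ℝ)) :
    J1 T u = J0 T u := by
  rw [J1, ← indicator_int T u hu]
  apply integral_congr_ae
  filter_upwards [hv] with t h
  simp only [mem_insert_iff, mem_singleton_iff] at h
  rcases h with h | h | h <;> simp [Set.indicator, h]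

theorem L1_min_subset_L0_min (T : ℝ) (hT : 0 < T) (U : Set (ℝ → ℝ))
    (hU : ∀ u ∈ U, Measurable u ∧ (∀ᵐ t ∂(volume.restrict (Icc (0:ℝ) T)), |u t| ≤ 1))
    (hbang : ∀ u ∈ {u ∈ U | ∀ v ∈ U, J1 T u ≤ J1 T v},
      ∀ᵐ t ∂(volume.restrict (Icc (0:ℝ) T)), u t ∈ ({-1, 0, 1} : Set ℝ)) :
    {u ∈ U | ∀ v ∈ U, J1 T u ≤ J1 T v} ⊆ {u ∈ U | ∀ v ∈ U, J0 T u ≤ J0 T v} ∧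
    ({u ∈ U | ∀ v ∈ U, J1 T u ≤ J1 T v}.Nonempty →
      {u ∈ U | ∀ v ∈ U, J0 T u ≤ J0 T v}.Nonempty) := by
  have hsub : {u ∈ U | ∀ v ∈ U, J1 T u ≤ J1 T v} ⊆ {u ∈ U | ∀ v ∈ U, J0 T u ≤ J0 T v} := by
    intro u hu
    obtain ⟨huU, hmin⟩ := hu
    refine ⟨huU, fun v hvU => ?_⟩
    calc J0 T u = J1 T u := (J1_eq_J0 T u (hU u huU).1 (hbang u ⟨huU, hmin⟩)).symm
    _ ≤ J1 T v := hmin v hvU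
    _ ≤ J0 T v := J1_le_J0 T v (hU v hvU).1 (hU v hvU).2
  exact ⟨hsub, fun ⟨u, hu⟩ => ⟨u, hsub hu⟩⟩
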